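/- Let X be a random vector in ℝ^p with distribution N(0, Σ), Σ positive definite, let α ∈ ℝ^p be nonzero, α₀ ∈ ℝ, and let w be a real random variable with the standard logistic distribution, independent of X. Define the binary treatment T = 1{α₀ + αᵀX + w > 0} and γ = (αᵀ Σ α)^{1/2}. Then E[X · T] = C Σ α, where C = γ^{−1} E_w[φ((−α₀ − w)/γ)] > 0 and φ is the standard normal density; equivalently, Σ⁻¹ E[X T] = C α with C > 0. -/

import Mathlib

open MeasureTheory ProbabilityTheory Matrix

/-- A random vector `X` is centered multivariate Gaussian `N(0, Σ)` iff every linear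
functional `cᵀX` is a centered real Gaussian with variance `cᵀ Σ c`. -/
def IsCenteredGaussianVector {Ω : Type*} [MeasurableSpace Ω] (μ : Measure Ω)
    {p : ℕ} (X : Ω → Fin p → ℝ) (S : Matrix (Fin p) (Fin p) ℝ) : Prop :=
  ∀ c : Fin p → ℝ,
    Measure.map (fun ω => ∑ i, c i * X ω i) μ =
      gaussianReal 0 (Real.toNNReal (c ⬝ᵥ S.mulVec c))

/-- The standard normal probability density function `φ`. -/
noncomputable def stdNormalPDF (u : ℝ) : ℝ :=
  (Real.sqrt (2 * Real.pi))⁻¹ * Real.exp (-u ^ 2 / 2)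

open Real Filter Set
open scoped NNReal ENNReal

lemma integrable_mul_gaussianPDFReal (v : ℝ≥0) (hv : v ≠ 0) :
    Integrable (fun x : ℝ => x * gaussianPDFReal 0 v x) := by
  have hvpos : (0:ℝ) < v := lt_of_le_of_ne v.2 (by exact_mod_cast (Ne.symm hv))
  have hb : (0:ℝ) < (2 * (v:ℝ))⁻¹ := by positivity
  have h := (integrable_mul_exp_neg_mul_sq hb).const_mul ((Real.sqrt (2 * Real.pi * v))⁻¹)
  refine h.congr (Filter.Eventually.of_forall fun x => ?_)
  simp only [gaussianPDFReal, sub_zero]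
  rw [neg_div, div_eq_mul_inv, mul_comm (x^2), ← neg_mul]
  ring

lemma integral_fun_gaussianReal {v : ℝ≥0} (hv : v ≠ 0) (f : ℝ → ℝ) :
    ∫ x, f x ∂(gaussianReal 0 v) = ∫ x, gaussianPDFReal 0 v x * f x := by
  rw [gaussianReal_of_var_ne_zero _ hv, gaussianPDF_def]
  have hmeas : Measurable fun x => (gaussianPDFReal 0 v x).toNNReal :=
    (measurable_gaussianPDFReal 0 v).real_toNNReal
  have : (fun x => ENNReal.ofReal (gaussianPDFReal 0 v x))
      = fun x => ((gaussianPDFReal 0 v x).toNNReal : ℝ≥0∞) := rfl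
  rw [this, integral_withDensity_eq_integral_smul hmeas]
  congr 1; ext x
  simp only [NNReal.smul_def, smul_eq_mul]
  rw [Real.coe_toNNReal _ (gaussianPDFReal_nonneg 0 v x)]

lemma gaussian_tail {σ : ℝ} (hσ : 0 < σ) (a : ℝ) :
    ∫ x, (if a < x then x else 0) ∂(gaussianReal 0 (Real.toNNReal (σ^2))) =
      σ * stdNormalPDF (a / σ) := by
  set v : ℝ≥0 := Real.toNNReal (σ^2) with hvdef
  have hcoe : (v : ℝ) = σ^2 := Real.coe_toNNReal _ (sq_nonneg σ)
  have hvR : (0:ℝ) < (v:ℝ) := by rw [hcoe]; positivity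
  have hv : v ≠ 0 := by
    intro h; rw [h] at hcoe; simp at hcoe; nlinarith
  rw [integral_fun_gaussianReal hv]
  have h1 : (fun x => gaussianPDFReal 0 v x * (if a < x then x else 0))
      = Set.indicator (Ioi a) (fun x => gaussianPDFReal 0 v x * x) := by
    ext x
    rw [Set.indicator_apply]
    by_cases h : a < x <;> simp [h, Set.mem_Ioi]
  rw [h1, integral_indicator measurableSet_Ioi]
  have hpdf : ∀ x : ℝ, gaussianPDFReal 0 v x
      = (Real.sqrt (2 * Real.pi * v))⁻¹ * Real.exp (-x^2/(2*(v:ℝ))) := by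
    intro x; simp [gaussianPDFReal]
  have hderiv : ∀ x ∈ Ici a,
      HasDerivAt (fun x => -(v:ℝ) * gaussianPDFReal 0 v x)
        (gaussianPDFReal 0 v x * x) x := by
    intro x _
    have h2 : HasDerivAt (fun x : ℝ => -x^2/(2*(v:ℝ)))
        (-(2 * x^1) / (2*(v:ℝ))) x := ((hasDerivAt_pow 2 x).neg).div_const _
    have h3 := (h2.exp).const_mul ((Real.sqrt (2 * Real.pi * v))⁻¹)
    have h4 := h3.const_mul (-(v:ℝ))
    refine HasDerivAt.congr_deriv (h4.congr_of_eventuallyEq ?_) ?_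
    · exact Filter.Eventually.of_forall fun y => by simp only [hpdf]
    · rw [hpdf x]; field_simp
  have hint : IntegrableOn (fun x => gaussianPDFReal 0 v x * x) (Ioi a) := by
    exact ((integrable_mul_gaussianPDFReal v hv).congr
      (Filter.Eventually.of_forall fun x => by ring)).integrableOn
  have htend : Tendsto (fun x => -(v:ℝ) * gaussianPDFReal 0 v x) atTop (nhds 0) := by
    have h5 : Tendsto (fun x : ℝ => -x^2/(2*(v:ℝ))) atTop atBot := by
      apply Tendsto.atBot_div_const (by positivity : (0:ℝ) < 2*(v:ℝ))
      have h5' : Tendsto (fun x : ℝ => x^2) atTop atTop := tendsto_pow_atTop (by norm_num)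
      simpa using tendsto_neg_atBot_iff.mpr h5'
    have h6 := (Real.tendsto_exp_atBot.comp h5).const_mul
      ((Real.sqrt (2 * Real.pi * v))⁻¹)
    have h7 := h6.const_mul (-(v:ℝ))
    simp only [mul_zero] at h7
    refine h7.congr fun x => ?_
    rw [hpdf x]; rfl
  rw [integral_Ioi_of_hasDerivAt_of_tendsto' hderiv hint htend]
  rw [hpdf a, stdNormalPDF]
  have hsqrt : Real.sqrt (2 * Real.pi * v) = Real.sqrt (2 * Real.pi) * σ := by
    rw [hcoe, Real.sqrt_mul (by positivity), Real.sqrt_sq hσ.le]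
  rw [hsqrt, hcoe]
  have : -(a/σ)^2/2 = -a^2/(2*σ^2) := by rw [div_pow]; ring
  rw [this]
  have hs : (0:ℝ) < Real.sqrt (2 * Real.pi) := Real.sqrt_pos.2 (by positivity)
  generalize Real.exp (-a^2/(2*σ^2)) = E
  field_simp
  ring

lemma integrable_id_gaussianReal (v : ℝ≥0) : Integrable id (gaussianReal 0 v) := by
  rcases eq_or_ne v 0 with rfl | hv
  · rw [gaussianReal_zero_var]
    exact (integrable_const (0:ℝ)).congr (by rw [ae_dirac_eq]; exact Filter.eventually_pure.2 rfl)
  · rw [gaussianReal_of_var_ne_zero _ hv, gaussianPDF_def]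
    have hmeas : Measurable fun x => (gaussianPDFReal 0 v x).toNNReal :=
      (measurable_gaussianPDFReal 0 v).real_toNNReal
    have : (fun x => ENNReal.ofReal (gaussianPDFReal 0 v x))
        = fun x => ((gaussianPDFReal 0 v x).toNNReal : ℝ≥0∞) := rfl
    rw [this, integrable_withDensity_iff_integrable_coe_smul hmeas]
    refine (integrable_mul_gaussianPDFReal v hv).congr (Filter.Eventually.of_forall fun x => ?_)
    simp only [NNReal.smul_def, smul_eq_mul, id]
    rw [Real.coe_toNNReal _ (gaussianPDFReal_nonneg 0 v x)]
    ring

lemma integrable_of_map_gaussian {Ω : Type*} [MeasurableSpace Ω] {μ : Measure Ω} {L : Ω → ℝ}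
    (hL : Measurable L) {v : ℝ≥0} (h : μ.map L = gaussianReal 0 v) : Integrable L μ := by
  have h2 := integrable_id_gaussianReal v
  rw [← h] at h2
  exact (integrable_map_measure aestronglyMeasurable_id hL.aemeasurable).mp h2

lemma deriv_zero_of_even {ψ : ℝ → ℝ} {D : ℝ} (h : HasDerivAt ψ D 0)
    (he : ∀ t, ψ (-t) = ψ t) : D = 0 := by
  have h0 : HasDerivAt ψ D (-0 : ℝ) := by simpa using h
  have h2 : HasDerivAt (fun t => ψ (-t)) (D * (-1)) 0 := by
    have := h0.comp (0:ℝ) (hasDerivAt_neg (0:ℝ))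
    simpa [Function.comp_def] using this
  have h3 : HasDerivAt ψ (-D) 0 := by
    have hfe : (fun t => ψ (-t)) = ψ := funext he
    rw [hfe] at h2
    simpa using h2
  linarith [h.unique h3]

lemma sum_single_mul {p : ℕ} (i : Fin p) (x : Fin p → ℝ) :
    ∑ j, (if j = i then (1:ℝ) else 0) * x j = x i := by
  rw [Finset.sum_congr rfl (fun j _ => by
    rw [ite_mul, one_mul, zero_mul])]
  simp

/-- With `X ~ N(0, Σ)` (`Σ` positive definite), `w` standard logistic
independent of `X`, treatment `T = 1{α₀ + αᵀX + w > 0}` and `γ = (αᵀ Σ α)^{1/2}`,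
`E[X · T] = C Σ α` where `C = γ⁻¹ E_w[φ((-α₀ - w)/γ)] > 0`; equivalently
`Σ⁻¹ E[X T] = C α`. -/
theorem gaussian_logistic_treatment_first_moment
    {Ω : Type*} [MeasurableSpace Ω] (μ : Measure Ω) [IsProbabilityMeasure μ]
    (p : ℕ) (X : Ω → Fin p → ℝ) (hX : Measurable X)
    (S : Matrix (Fin p) (Fin p) ℝ) (hS : S.PosDef)
    (hGauss : IsCenteredGaussianVector μ X S)
    (w : Ω → ℝ) (hw : Measurable w)
    (hwlaw : ∀ t : ℝ, μ {ω | w ω ≤ t} = ENNReal.ofReal (1 / (1 + Real.exp (-t))))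
    (hindep : IndepFun X w μ)
    (α : Fin p → ℝ) (hα : α ≠ 0) (α₀ : ℝ)
    (T : Ω → ℝ)
    (hT : T = fun ω => if 0 < α₀ + (∑ i, α i * X ω i) + w ω then (1 : ℝ) else 0)
    (γ C : ℝ) (hγ : γ = Real.sqrt (α ⬝ᵥ S.mulVec α))
    (hC : C = γ⁻¹ * ∫ ω, stdNormalPDF ((-α₀ - w ω) / γ) ∂μ) :
    (∫ ω, T ω • X ω ∂μ) = C • S.mulVec α ∧
    0 < C ∧
    S⁻¹.mulVec (∫ ω, T ω • X ω ∂μ) = C • α := by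
  -- basic setup
  have hv2pos : 0 < α ⬝ᵥ S.mulVec α := by
    have := hS.dotProduct_mulVec_pos hα
    simpa using this
  set v2 : ℝ := α ⬝ᵥ S.mulVec α with hv2def
  have hγpos : 0 < γ := by rw [hγ]; exact Real.sqrt_pos.2 hv2pos
  have hγ2 : γ^2 = v2 := by rw [hγ]; exact Real.sq_sqrt hv2pos.le
  -- the linear functional machinery
  have hLmeas : ∀ c : Fin p → ℝ, Measurable (fun ω => ∑ i, c i * X ω i) := fun c =>
    Finset.measurable_sum _ (fun i _ => (measurable_const.mul ((measurable_pi_apply i).comp hX)))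
  have hLint : ∀ c : Fin p → ℝ, Integrable (fun ω => ∑ i, c i * X ω i) μ := fun c =>
    integrable_of_map_gaussian (hLmeas c) (hGauss c)
  set Z : Ω → ℝ := fun ω => ∑ i, α i * X ω i with hZdef
  have hZmeas : Measurable Z := hLmeas α
  have hZint : Integrable Z μ := hLint α
  have hXi_meas : ∀ i, Measurable (fun ω => X ω i) := fun i => (measurable_pi_apply i).comp hX
  have hXi_int : ∀ i, Integrable (fun ω => X ω i) μ := by
    intro i
    have := hLint (fun j => if j = i then (1:ℝ) else 0)
    refine this.congr (Filter.Eventually.of_forall fun ω => ?_)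
    exact sum_single_mul i (X ω)
  -- the logistic function g
  set g : ℝ → ℝ := fun z => 1 - 1 / (1 + Real.exp (α₀ + z)) with hgdef
  have hgcont : Continuous g := by
    rw [hgdef]
    simp only [one_div]
    refine continuous_const.sub (Continuous.inv₀ ?_ ?_)
    · exact continuous_const.add (Real.continuous_exp.comp (continuous_const.add continuous_id))
    · intro z
      show (1:ℝ) + Real.exp (α₀ + z) ≠ 0
      positivity
  have hg_nonneg : ∀ z, 0 ≤ g z := by
    intro z
    have h1 : (0:ℝ) < 1 + Real.exp (α₀ + z) := by positivity
    have h2 : 1 / (1 + Real.exp (α₀ + z)) ≤ 1 := by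
      rw [div_le_one h1]; linarith [Real.exp_pos (α₀ + z)]
    simp only [hgdef]; linarith
  have hg_le_one : ∀ z, g z ≤ 1 := by
    intro z
    have h1 : (0:ℝ) < 1 + Real.exp (α₀ + z) := by positivity
    have h2 : 0 ≤ 1 / (1 + Real.exp (α₀ + z)) := by positivity
    simp only [hgdef]; linarith
  -- the law of w
  set ν : Measure ℝ := μ.map w with hνdef
  have hνprob : IsProbabilityMeasure ν := Measure.isProbabilityMeasure_map hw.aemeasurable
  have hνIoi : ∀ z : ℝ, (ν (Ioi (-α₀ - z))).toReal = g z := by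
    intro z
    set t : ℝ := -α₀ - z with htdef
    have hIic : ν (Iic t) = ENNReal.ofReal (1 / (1 + Real.exp (-t))) := by
      rw [hνdef, Measure.map_apply hw measurableSet_Iic]
      exact hwlaw t
    have hFle : (1:ℝ) / (1 + Real.exp (-t)) ≤ 1 := by
      rw [div_le_one (by positivity)]
      linarith [Real.exp_pos (-t)]
    have hFnn : (0:ℝ) ≤ 1 / (1 + Real.exp (-t)) := by positivity
    have hcompl : Ioi t = (Iic t)ᶜ := by simp
    rw [hcompl, measure_compl measurableSet_Iic (measure_ne_top ν _), hIic]
    have huniv : ν univ = 1 := measure_univ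
    rw [huniv]
    rw [ENNReal.toReal_sub_of_le (by exact_mod_cast ENNReal.ofReal_le_one.mpr hFle) ENNReal.one_ne_top]
    rw [ENNReal.toReal_one, ENNReal.toReal_ofReal hFnn]
    have hneg : -t = α₀ + z := by rw [htdef]; ring
    rw [hneg]
  -- Step A : Fubini over (X, w)
  haveI hXprob : IsProbabilityMeasure (μ.map X) := Measure.isProbabilityMeasure_map hX.aemeasurable
  have hsmeas : Measurable fun x : Fin p → ℝ => ∑ j, α j * x j :=
    Finset.measurable_sum _ (fun j _ => measurable_const.mul (measurable_pi_apply j))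
  have hA : ∀ i, ∫ ω, (if 0 < α₀ + Z ω + w ω then (1:ℝ) else 0) * X ω i ∂μ
      = ∫ ω, g (Z ω) * X ω i ∂μ := by
    intro i
    set Φ : (Fin p → ℝ) × ℝ → ℝ :=
      fun q => (if 0 < α₀ + (∑ j, α j * q.1 j) + q.2 then (1:ℝ) else 0) * q.1 i with hΦdef
    have hs2meas : Measurable fun q : (Fin p → ℝ) × ℝ => ∑ j, α j * q.1 j :=
      hsmeas.comp measurable_fst
    have hsetmeas : MeasurableSet {q : (Fin p → ℝ) × ℝ | 0 < α₀ + (∑ j, α j * q.1 j) + q.2} :=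
      measurableSet_lt measurable_const ((measurable_const.add hs2meas).add measurable_snd)
    have hΦmeas : Measurable Φ :=
      (Measurable.ite hsetmeas measurable_const measurable_const).mul
        ((measurable_pi_apply i).comp measurable_fst)
    have hpair : μ.map (fun ω => (X ω, w ω)) = (μ.map X).prod ν :=
      (indepFun_iff_map_prod_eq_prod_map_map hX.aemeasurable hw.aemeasurable).mp hindep
    have hpairmeas : Measurable fun ω => (X ω, w ω) := hX.prodMk hw
    have hΦcomp_int : Integrable (fun ω => Φ (X ω, w ω)) μ := by
      refine Integrable.mono' (hXi_int i).abs (hΦmeas.comp hpairmeas).aestronglyMeasurable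
        (Filter.Eventually.of_forall fun ω => ?_)
      rw [hΦdef]; dsimp only
      rw [Real.norm_eq_abs, abs_mul]
      split
      · simp
      · simp [abs_nonneg]
    have hΦint : Integrable Φ ((μ.map X).prod ν) := by
      rw [← hpair]
      exact (integrable_map_measure hΦmeas.aestronglyMeasurable hpairmeas.aemeasurable).mpr
        hΦcomp_int
    have step1 : ∫ ω, Φ (X ω, w ω) ∂μ = ∫ q, Φ q ∂((μ.map X).prod ν) := by
      rw [← hpair, integral_map hpairmeas.aemeasurable]
      rw [hpair]
      exact hΦmeas.aestronglyMeasurable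
    have inner : ∀ x : Fin p → ℝ, ∫ u, Φ (x, u) ∂ν = g (∑ j, α j * x j) * x i := by
      intro x
      have h1 : (fun u => Φ (x, u))
          = fun u => (Ioi (-α₀ - ∑ j, α j * x j)).indicator (fun _ => (1:ℝ)) u * x i := by
        funext u
        rw [hΦdef]; dsimp only
        rw [Set.indicator_apply]
        by_cases h : 0 < α₀ + (∑ j, α j * x j) + u
        · rw [if_pos h, if_pos (by rw [mem_Ioi]; linarith)]
        · rw [if_neg h, if_neg (by rw [mem_Ioi]; intro hc; exact h (by linarith))]
      rw [h1, integral_mul_const, integral_indicator measurableSet_Ioi, setIntegral_const,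
        smul_eq_mul, mul_one, measureReal_def, hνIoi]
    have step2 : ∫ q, Φ q ∂((μ.map X).prod ν) = ∫ x, ∫ u, Φ (x, u) ∂ν ∂(μ.map X) :=
      integral_prod _ hΦint
    have step3 : ∫ x, g (∑ j, α j * x j) * x i ∂(μ.map X) = ∫ ω, g (Z ω) * X ω i ∂μ := by
      rw [integral_map hX.aemeasurable]
      exact ((hgcont.measurable.comp hsmeas).mul (measurable_pi_apply i)).aestronglyMeasurable
    calc ∫ ω, (if 0 < α₀ + Z ω + w ω then (1:ℝ) else 0) * X ω i ∂μ
        = ∫ ω, Φ (X ω, w ω) ∂μ := rfl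
      _ = ∫ q, Φ q ∂((μ.map X).prod ν) := step1
      _ = ∫ x, ∫ u, Φ (x, u) ∂ν ∂(μ.map X) := step2
      _ = ∫ x, g (∑ j, α j * x j) * x i ∂(μ.map X) := by
          exact integral_congr_ae (Filter.Eventually.of_forall fun x => inner x)
      _ = ∫ ω, g (Z ω) * X ω i ∂μ := step3
  -- Step C : compute ∫ g(Z) Z
  have hstdcont : Continuous stdNormalPDF := by
    unfold stdNormalPDF
    exact continuous_const.mul (Real.continuous_exp.comp (by continuity))
  have hCval : ∫ ω, g (Z ω) * Z ω ∂μ = γ * ∫ ω, stdNormalPDF ((-α₀ - w ω) / γ) ∂μ := by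
    set N : Measure ℝ := gaussianReal 0 (Real.toNNReal v2) with hNdef
    haveI : IsProbabilityMeasure N := by rw [hNdef]; infer_instance
    have hZlaw : μ.map Z = N := hGauss α
    have e1 : ∫ ω, g (Z ω) * Z ω ∂μ = ∫ z, g z * z ∂N := by
      rw [← hZlaw, integral_map hZmeas.aemeasurable]
      rw [hZlaw]
      exact (hgcont.measurable.mul measurable_id).aestronglyMeasurable
    set F : ℝ × ℝ → ℝ := fun q => (if 0 < α₀ + q.1 + q.2 then (1:ℝ) else 0) * q.1 with hFdef
    have hFmeas : Measurable F := by
      refine Measurable.mul ?_ measurable_fst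
      exact Measurable.ite
        (measurableSet_lt measurable_const ((measurable_const.add measurable_fst).add
          measurable_snd)) measurable_const measurable_const
    have hFbd : ∀ q : ℝ × ℝ, ‖F q‖ ≤ |q.1| := by
      intro q
      rw [hFdef]; dsimp only
      rw [Real.norm_eq_abs, abs_mul]
      split
      · simp
      · simp [abs_nonneg]
    have hinner1 : ∀ z : ℝ, Integrable (fun u => F (z, u)) ν := by
      intro z
      refine Integrable.mono' (integrable_const |z|)
        ((hFmeas.comp (measurable_const.prodMk measurable_id)).aestronglyMeasurable)
        (Filter.Eventually.of_forall fun u => hFbd (z, u))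
    have hFint : Integrable (Function.uncurry fun z u => F (z, u)) (N.prod ν) := by
      have huncurry : (Function.uncurry fun z u => F (z, u)) = F := rfl
      rw [huncurry]
      rw [integrable_prod_iff hFmeas.aestronglyMeasurable]
      constructor
      · exact Filter.Eventually.of_forall hinner1
      · refine Integrable.mono' (integrable_id_gaussianReal (Real.toNNReal v2)).abs
          (hFmeas.aestronglyMeasurable.norm.integral_prod_right')
          (Filter.Eventually.of_forall fun z => ?_)
        have hnn : 0 ≤ ∫ u, ‖F (z, u)‖ ∂ν := integral_nonneg fun u => norm_nonneg _
        rw [Real.norm_eq_abs, abs_of_nonneg hnn]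
        calc ∫ u, ‖F (z, u)‖ ∂ν ≤ ∫ _, |z| ∂ν :=
              integral_mono (hinner1 z).norm (integrable_const _)
                (fun u => hFbd (z, u))
          _ = |z| := by rw [integral_const]; simp
    have e2 : ∫ z, g z * z ∂N = ∫ z, ∫ u, F (z, u) ∂ν ∂N := by
      refine integral_congr_ae (Filter.Eventually.of_forall fun z => ?_)
      have h1 : (fun u => F (z, u))
          = fun u => (Ioi (-α₀ - z)).indicator (fun _ => (1:ℝ)) u * z := by
        funext u
        rw [hFdef]; dsimp only
        rw [Set.indicator_apply]
        by_cases h : 0 < α₀ + z + u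
        · rw [if_pos h, if_pos (by rw [mem_Ioi]; linarith)]
        · rw [if_neg h, if_neg (by rw [mem_Ioi]; intro hc; exact h (by linarith))]
      dsimp only
      rw [h1, integral_mul_const, integral_indicator measurableSet_Ioi, setIntegral_const,
        smul_eq_mul, mul_one, measureReal_def, hνIoi]
    have e3 : ∫ z, ∫ u, F (z, u) ∂ν ∂N = ∫ u, ∫ z, F (z, u) ∂N ∂ν :=
      integral_integral_swap hFint
    have e4 : ∀ u : ℝ, ∫ z, F (z, u) ∂N = γ * stdNormalPDF ((-α₀ - u) / γ) := by
      intro u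
      have h1 : (fun z => F (z, u)) = fun z => if (-α₀ - u) < z then z else 0 := by
        funext z
        rw [hFdef]; dsimp only
        by_cases h : 0 < α₀ + z + u
        · rw [if_pos h, if_pos (by linarith), one_mul]
        · rw [if_neg h, if_neg (by intro hc; exact h (by linarith)), zero_mul]
      rw [h1, hNdef]
      have hv2γ : v2 = γ^2 := hγ2.symm
      rw [hv2γ]
      exact gaussian_tail hγpos (-α₀ - u)
    have e5 : ∫ u, ∫ z, F (z, u) ∂N ∂ν = γ * ∫ ω, stdNormalPDF ((-α₀ - w ω) / γ) ∂μ := by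
      rw [integral_congr_ae (Filter.Eventually.of_forall e4), integral_const_mul]
      congr 1
      rw [hνdef, integral_map hw.aemeasurable]
      exact (hstdcont.comp ((continuous_const.sub continuous_id).div_const γ)).aestronglyMeasurable
    rw [e1, e2, e3, e5]
  -- Step B : E[g(Z) X_i] = β_i E[g(Z) Z]
  -- symmetry of the quadratic form
  have hST : Sᵀ = S := by
    have h := hS.1
    ext j k
    have h2 := congrFun (congrFun h j) k
    rw [Matrix.conjTranspose_apply, star_trivial] at h2
    rw [Matrix.transpose_apply]
    exact h2
  have hsymm : ∀ a b : Fin p → ℝ, a ⬝ᵥ S.mulVec b = b ⬝ᵥ S.mulVec a := by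
    intro a b
    rw [Matrix.dotProduct_mulVec]
    rw [show a ᵥ* S = S *ᵥ a from by rw [← hST, Matrix.mulVec_transpose, hST]]
    rw [dotProduct_comm]
  -- the antiderivative of g
  set G : ℝ → ℝ := fun z => ∫ u in (0:ℝ)..z, g u with hGdef
  have hGd : ∀ z, HasDerivAt G (g z) z := fun z =>
    (intervalIntegral.integral_hasStrictDerivAt_right
      (hgcont.intervalIntegrable _ _)
      (hgcont.stronglyMeasurable.stronglyMeasurableAtFilter)
      hgcont.continuousAt).hasDerivAt
  have hGcont : Continuous G :=
    continuous_iff_continuousAt.mpr fun z => (hGd z).continuousAt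
  have hGlip : ∀ a b : ℝ, |G a - G b| ≤ |a - b| := by
    intro a b
    have h1 : G a - G b = ∫ u in b..a, g u :=
      intervalIntegral.integral_interval_sub_left
        (hgcont.intervalIntegrable _ _) (hgcont.intervalIntegrable _ _)
    rw [h1]
    have h2 : ‖∫ u in b..a, g u‖ ≤ 1 * |a - b| :=
      intervalIntegral.norm_integral_le_of_norm_le_const (fun x _ => by
        rw [Real.norm_eq_abs, abs_le]; exact ⟨by linarith [hg_nonneg x], hg_le_one x⟩)
    rw [Real.norm_eq_abs, one_mul] at h2
    exact h2
  have hGbound : ∀ z, |G z| ≤ |z| := by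
    intro z
    have := hGlip z 0
    simpa [hGdef, intervalIntegral.integral_same] using this
  have hB : ∀ i, ∫ ω, g (Z ω) * X ω i ∂μ
      = (S.mulVec α i / v2) * ∫ ω, g (Z ω) * Z ω ∂μ := by
    intro i
    set β : ℝ := S.mulVec α i / v2 with hβdef
    set c : Fin p → ℝ := fun j => (if j = i then (1:ℝ) else 0) - β * α j with hcdef
    set Y : Ω → ℝ := fun ω => X ω i - β * Z ω with hYdef
    have hYmeas : Measurable Y := (hXi_meas i).sub (measurable_const.mul hZmeas)
    have hYint : Integrable Y μ := (hXi_int i).sub (hZint.const_mul β)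
    have hYeq : ∀ ω, (∑ j, c j * X ω j) = Y ω := by
      intro ω
      rw [hcdef, hYdef]; dsimp only
      rw [Finset.sum_congr rfl (fun j _ => by rw [sub_mul, mul_assoc])]
      rw [Finset.sum_sub_distrib, sum_single_mul, ← Finset.mul_sum]
    -- cross terms vanish
    have he_dot : ∀ m : Fin p → ℝ, (fun j => if j = i then (1:ℝ) else 0) ⬝ᵥ m = m i := by
      intro m
      exact sum_single_mul i m
    have hcSα : c ⬝ᵥ S.mulVec α = 0 := by
      rw [hcdef]
      have hexp : (fun j => (if j = i then (1:ℝ) else 0) - β * α j) ⬝ᵥ S.mulVec α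
          = S.mulVec α i - β * (α ⬝ᵥ S.mulVec α) := by
        simp only [dotProduct, sub_mul, Finset.sum_sub_distrib, mul_assoc]
        rw [← Finset.mul_sum]
        congr 1
        exact sum_single_mul i (S.mulVec α)
      rw [hexp, hβdef, ← hv2def]
      field_simp; ring
    have hαSc : α ⬝ᵥ S.mulVec c = 0 := by rw [hsymm]; exact hcSα
    set qc : ℝ := c ⬝ᵥ S.mulVec c with hqcdef
    have hvar : ∀ t : ℝ, ((α + t • c) ⬝ᵥ S.mulVec (α + t • c)) = v2 + t^2 * qc := by
      intro t
      rw [Matrix.mulVec_add, Matrix.mulVec_smul]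
      rw [dotProduct_add, add_dotProduct, add_dotProduct]
      rw [dotProduct_smul, smul_dotProduct, smul_dotProduct, dotProduct_smul]
      simp only [smul_eq_mul, hαSc, hcSα, mul_zero, hqcdef, ← hv2def]
      ring
    have hlawt : ∀ t : ℝ, μ.map (fun ω => Z ω + t * Y ω)
        = gaussianReal 0 (Real.toNNReal (v2 + t^2 * qc)) := by
      intro t
      have h := hGauss (α + t • c)
      rw [hvar t] at h
      rw [← h]
      congr 1
      funext ω
      rw [show (∑ j, (α + t • c) j * X ω j) = (∑ j, α j * X ω j) + t * ∑ j, c j * X ω j from by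
        rw [Finset.sum_congr rfl (fun j _ => by
          rw [Pi.add_apply, Pi.smul_apply, smul_eq_mul, add_mul, mul_assoc])]
        rw [Finset.sum_add_distrib, ← Finset.mul_sum]]
      rw [hYeq ω]
    have hZtYmeas : ∀ t : ℝ, Measurable (fun ω => Z ω + t * Y ω) := fun t =>
      hZmeas.add (measurable_const.mul hYmeas)
    set ψ : ℝ → ℝ := fun t => ∫ ω, G (Z ω + t * Y ω) ∂μ with hψdef
    have hψeq : ∀ t : ℝ, ψ t = ∫ x, G x ∂(gaussianReal 0 (Real.toNNReal (v2 + t^2 * qc))) := by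
      intro t
      rw [hψdef]; dsimp only
      rw [← hlawt t, integral_map (hZtYmeas t).aemeasurable
        hGcont.measurable.aestronglyMeasurable]
    have heven : ∀ t : ℝ, ψ (-t) = ψ t := by
      intro t
      rw [hψeq, hψeq, neg_sq]
    have hder := hasDerivAt_integral_of_dominated_loc_of_lip
      (F := fun (t : ℝ) (ω : Ω) => G (Z ω + t * Y ω))
      (F' := fun ω => g (Z ω) * Y ω) (x₀ := (0:ℝ)) (s := Metric.ball 0 1) (bound := fun ω => |Y ω|)
      (Metric.ball_mem_nhds _ one_pos)
      (Filter.Eventually.of_forall fun t =>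
        (hGcont.measurable.comp (hZtYmeas t)).aestronglyMeasurable)
      (by
        refine Integrable.mono' (hZint.add (hYint.const_mul 0)).abs
          ((hGcont.measurable.comp (hZtYmeas 0)).aestronglyMeasurable)
          (Filter.Eventually.of_forall fun ω => ?_)
        rw [Real.norm_eq_abs]
        exact hGbound _)
      (((hgcont.measurable.comp hZmeas).mul hYmeas).aestronglyMeasurable)
      (Filter.Eventually.of_forall fun ω => by
        rw [lipschitzOnWith_iff_dist_le_mul]
        intro t _ s _
        rw [Real.dist_eq, Real.dist_eq]
        calc |G (Z ω + t * Y ω) - G (Z ω + s * Y ω)|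
            ≤ |(Z ω + t * Y ω) - (Z ω + s * Y ω)| := hGlip _ _
          _ = |Y ω| * |t - s| := by
              rw [show (Z ω + t * Y ω) - (Z ω + s * Y ω) = Y ω * (t - s) from by ring,
                abs_mul]
          _ = ↑(Real.nnabs (|Y ω|)) * |t - s| := by
              rw [Real.coe_nnabs, abs_abs])
      hYint.abs
      (Filter.Eventually.of_forall fun ω => by
        have l : HasDerivAt (fun t : ℝ => Z ω + t * Y ω) (Y ω) 0 := by
          simpa using ((hasDerivAt_id (0:ℝ)).mul_const (Y ω)).const_add (Z ω)
        have hcomp := (hGd (Z ω + 0 * Y ω)).comp (0:ℝ) l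
        simpa [Function.comp_def] using hcomp)
    obtain ⟨hDint, hψder⟩ := hder
    have hD0 : ∫ ω, g (Z ω) * Y ω ∂μ = 0 := deriv_zero_of_even hψder heven
    have I1 : Integrable (fun ω => g (Z ω) * X ω i) μ := by
      refine Integrable.mono' (hXi_int i).abs
        ((hgcont.measurable.comp hZmeas).mul (hXi_meas i)).aestronglyMeasurable
        (Filter.Eventually.of_forall fun ω => ?_)
      rw [Real.norm_eq_abs, abs_mul, abs_of_nonneg (hg_nonneg _)]
      exact mul_le_of_le_one_left (abs_nonneg _) (hg_le_one _)
    have I2 : Integrable (fun ω => g (Z ω) * Z ω) μ := by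
      refine Integrable.mono' hZint.abs
        ((hgcont.measurable.comp hZmeas).mul hZmeas).aestronglyMeasurable
        (Filter.Eventually.of_forall fun ω => ?_)
      rw [Real.norm_eq_abs, abs_mul, abs_of_nonneg (hg_nonneg _)]
      exact mul_le_of_le_one_left (abs_nonneg _) (hg_le_one _)
    have hexp : ∫ ω, g (Z ω) * Y ω ∂μ
        = (∫ ω, g (Z ω) * X ω i ∂μ) - β * ∫ ω, g (Z ω) * Z ω ∂μ := by
      rw [show (fun ω => g (Z ω) * Y ω)
          = fun ω => g (Z ω) * X ω i - β * (g (Z ω) * Z ω) from by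
        funext ω; rw [hYdef]; ring]
      rw [integral_sub I1 (I2.const_mul β), integral_const_mul]
    rw [hexp] at hD0
    linarith
  -- positivity of C
  have hIw_pos : 0 < ∫ ω, stdNormalPDF ((-α₀ - w ω) / γ) ∂μ := by
    have hstd_pos : ∀ u : ℝ, 0 < stdNormalPDF u := by
      intro u; unfold stdNormalPDF
      have h2 : (0:ℝ) < Real.sqrt (2 * Real.pi) := Real.sqrt_pos.2 (by positivity)
      positivity
    have hmeas2 : Measurable (fun ω => stdNormalPDF ((-α₀ - w ω) / γ)) :=
      hstdcont.measurable.comp ((measurable_const.sub hw).div_const γ)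
    have hint : Integrable (fun ω => stdNormalPDF ((-α₀ - w ω) / γ)) μ := by
      refine Integrable.mono' (integrable_const ((Real.sqrt (2 * Real.pi))⁻¹))
        hmeas2.aestronglyMeasurable (Filter.Eventually.of_forall fun ω => ?_)
      rw [Real.norm_eq_abs, abs_of_pos (hstd_pos _)]
      unfold stdNormalPDF
      have h3 : Real.exp (-((-α₀ - w ω) / γ) ^ 2 / 2) ≤ 1 := by
        rw [Real.exp_le_one_iff]
        have := sq_nonneg ((-α₀ - w ω) / γ)
        linarith
      have h4 : (0:ℝ) ≤ (Real.sqrt (2 * Real.pi))⁻¹ := by positivity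
      calc (Real.sqrt (2 * Real.pi))⁻¹ * Real.exp (-((-α₀ - w ω) / γ) ^ 2 / 2)
          ≤ (Real.sqrt (2 * Real.pi))⁻¹ * 1 := by
            exact mul_le_mul_of_nonneg_left h3 h4
        _ = (Real.sqrt (2 * Real.pi))⁻¹ := mul_one _
    rw [integral_pos_iff_support_of_nonneg (fun ω => (hstd_pos _).le) hint]
    have hsupp : Function.support (fun ω => stdNormalPDF ((-α₀ - w ω) / γ)) = univ :=
      Set.eq_univ_of_forall (fun ω => (hstd_pos _).ne')
    rw [hsupp]
    simp
  have hCpos : 0 < C := by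
    rw [hC]; exact mul_pos (inv_pos.2 hγpos) hIw_pos
  -- key componentwise identity
  have key : ∀ i, ∫ ω, T ω * X ω i ∂μ = C * S.mulVec α i := by
    intro i
    have h1 : ∫ ω, T ω * X ω i ∂μ = ∫ ω, (if 0 < α₀ + Z ω + w ω then (1:ℝ) else 0) * X ω i ∂μ := by
      rw [hT]
    rw [h1, hA i, hB i, hCval, hC]
    have hv2ne : v2 ≠ 0 := hv2pos.ne'
    field_simp [hγpos.ne']
    rw [← hγ2]
  -- integrability of T • X
  have hTmeas : Measurable T := by
    rw [hT]
    exact Measurable.ite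
      (measurableSet_lt measurable_const ((measurable_const.add hZmeas).add hw))
      measurable_const measurable_const
  have hTbd : ∀ ω, |T ω| ≤ 1 := by
    intro ω; rw [hT]; dsimp only; split <;> simp
  have hTXint : Integrable (fun ω => T ω • X ω) μ := by
    refine Integrable.mono' (g := fun ω => ∑ j, |X ω j|)
      (integrable_finset_sum _ (fun j _ => (hXi_int j).abs))
      ((hTmeas.smul hX).aestronglyMeasurable) (Filter.Eventually.of_forall fun ω => ?_)
    rw [pi_norm_le_iff_of_nonneg (Finset.sum_nonneg fun j _ => abs_nonneg _)]
    intro i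
    calc ‖(T ω • X ω) i‖ = |T ω| * |X ω i| := by
          simp [Pi.smul_apply, smul_eq_mul, abs_mul]
      _ ≤ 1 * |X ω i| := by
          exact mul_le_mul_of_nonneg_right (hTbd ω) (abs_nonneg _)
      _ = |X ω i| := one_mul _
      _ ≤ ∑ j, |X ω j| := Finset.single_le_sum (f := fun j => |X ω j|)
          (fun j _ => abs_nonneg _) (Finset.mem_univ i)
  -- vector identity
  have hvec : (∫ ω, T ω • X ω ∂μ) = C • S.mulVec α := by
    funext i
    have hproj := (ContinuousLinearMap.proj (R := ℝ) (φ := fun _ : Fin p => ℝ) i).integral_comp_comm hTXint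
    have h2 : (∫ ω, T ω • X ω ∂μ) i = ∫ ω, T ω * X ω i ∂μ := by
      rw [show (∫ ω, T ω • X ω ∂μ) i
          = (ContinuousLinearMap.proj (R := ℝ) (φ := fun _ : Fin p => ℝ) i)
            (∫ ω, T ω • X ω ∂μ) from rfl, ← hproj]
      simp [ContinuousLinearMap.proj_apply, Pi.smul_apply, smul_eq_mul]
    rw [h2, key i]
    simp [Pi.smul_apply, smul_eq_mul]
  refine ⟨hvec, hCpos, ?_⟩
  rw [hvec]
  have hdet : IsUnit S.det := isUnit_iff_ne_zero.mpr hS.det_pos.ne'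
  rw [Matrix.mulVec_smul, Matrix.mulVec_mulVec, Matrix.nonsing_inv_mul S hdet, Matrix.one_mulVec]
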